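/- Let α > 0 and let Ω : ℝ → ℝ be the piecewise constant function Ω(t) = λ*_k for t ∈ [k, k+1) with λ*_k ∈ [0,1]. If μ is a positive integer such that |λ*_{k+μ} − λ*_k| ≤ ε for all integers k with k ≥ −N (for some N with e^{−αN} ≤ ε), then the function H(t) = ∫_{−∞}^{t} e^{−α(t−s)} Ω(s) ds satisfies |H(t+μ) − H(t)| ≤ ε/α + e^{−α(t+N)}/α for all t ≥ −N; in particular shift-closeness of the sequence (λ*_k) transfers to shift-closeness of H. -/

import Mathlib

open MeasureTheory Set Real

private lemma expIntegrableIic (α t : ℝ) (hα : 0 < α) :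
    IntegrableOn (fun s : ℝ => Real.exp (α * s)) (Iic t) := by
  have m : MeasurableEmbedding fun x : ℝ => -x :=
    (Homeomorph.neg ℝ).measurableEmbedding
  have h : IntegrableOn (fun x : ℝ => Real.exp (-α * x)) (Ici (-t)) :=
    (integrableOn_Ici_iff_integrableOn_Ioi).mpr (exp_neg_integrableOn_Ioi (-t) hα)
  have h' : IntegrableOn ((fun s : ℝ => Real.exp (α * s)) ∘ fun x : ℝ => -x)
      ((fun x : ℝ => -x) ⁻¹' Iic t) := by
    have : ((fun s : ℝ => Real.exp (α * s)) ∘ fun x : ℝ => -x)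
        = fun x : ℝ => Real.exp (-α * x) := by
      funext x; simp [Function.comp, neg_mul, mul_neg]
    rw [this, neg_preimage, neg_Iic]
    exact h
  have := (m.integrableOn_map_iff
    (f := fun s : ℝ => Real.exp (α * s)) (μ := volume) (s := Iic t)).mpr h'
  rwa [Measure.map_neg_eq_self (volume : Measure ℝ)] at this

private lemma expIntegralIic (α t : ℝ) (hα : 0 < α) :
    ∫ s in Iic t, Real.exp (α * s) = Real.exp (α * t) / α := by
  have h1 : ∫ s in Iic t, Real.exp (α * s)
      = ∫ x in Ioi (-t), (fun x : ℝ => Real.exp (-(α * x))) x := by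
    rw [← integral_comp_neg_Iic]
    congr 1; funext s; simp [mul_neg]
  rw [h1]
  have h2 := integral_comp_mul_left_Ioi (fun x : ℝ => Real.exp (-x)) (-t) hα
  simp only [smul_eq_mul] at h2
  calc (∫ x in Ioi (-t), Real.exp (-(α * x)))
      = α⁻¹ * ∫ x in Ioi (α * -t), Real.exp (-x) := h2
    _ = α⁻¹ * Real.exp (-(α * -t)) := by rw [integral_exp_neg_Ioi]
    _ = Real.exp (α * t) / α := by rw [div_eq_inv_mul]; ring_nf

private lemma shiftIntegralIic (f : ℝ → ℝ) (t c : ℝ) :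
    ∫ s in Iic (t + c), f s = ∫ s in Iic t, f (s + c) := by
  have m : MeasurableEmbedding fun x : ℝ => x + c :=
    (Homeomorph.addRight c).measurableEmbedding
  have h := m.setIntegral_map (μ := volume) (g := f) (s := Iic (t + c))
  rw [map_add_right_eq_self volume c] at h
  rw [h]
  congr 1
  ext x
  simp

theorem shift_closeness_transfers_to_H
    (α : ℝ) (hα : 0 < α)
    (lam : ℤ → ℝ) (hlam : ∀ k, lam k ∈ Set.Icc (0 : ℝ) 1)
    (Ω : ℝ → ℝ) (hΩ : ∀ t : ℝ, Ω t = lam ⌊t⌋)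
    (ε : ℝ) (hε : 0 < ε)
    (μ : ℕ) (hμ : 0 < μ)
    (N : ℕ) (hN : Real.exp (-α * N) ≤ ε)
    (hclose : ∀ k : ℤ, -(N : ℤ) ≤ k → |lam (k + μ) - lam k| ≤ ε)
    (H : ℝ → ℝ)
    (hH : ∀ t, H t = ∫ s in Set.Iic t, Real.exp (-α * (t - s)) * Ω s) :
    ∀ t : ℝ, -(N : ℝ) ≤ t →
      |H (t + μ) - H t| ≤ ε / α + Real.exp (-α * (t + N)) / α := by
  -- basic facts about Ω
  have hΩm : Measurable Ω := by
    have : Ω = lam ∘ (Int.floor : ℝ → ℤ) := funext hΩ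
    rw [this]
    exact (measurable_of_countable lam).comp Int.measurable_floor
  have hΩ01 : ∀ s, Ω s ∈ Set.Icc (0 : ℝ) 1 := fun s => by rw [hΩ]; exact hlam _
  have hΩabs : ∀ s, |Ω s| ≤ 1 := fun s =>
    abs_le.mpr ⟨le_trans (by norm_num) (hΩ01 s).1, (hΩ01 s).2⟩
  -- integrability of the integrands
  have hint : ∀ (t : ℝ) (g : ℝ → ℝ), Measurable g → (∀ s, |g s| ≤ 1) →
      IntegrableOn (fun s => Real.exp (-α * (t - s)) * g s) (Iic t) := by
    intro t g hg hgb
    have hbd : IntegrableOn (fun s : ℝ => Real.exp (-α * t) * Real.exp (α * s)) (Iic t) :=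
      (expIntegrableIic α t hα).const_mul _
    refine hbd.mono' ?_ ?_
    · exact (((measurable_const.sub measurable_id).const_mul (-α)).exp.mul
        hg).aestronglyMeasurable
    · filter_upwards with s
      have : |Real.exp (-α * (t - s)) * g s| ≤ Real.exp (-α * (t - s)) * 1 := by
        rw [abs_mul, abs_of_pos (Real.exp_pos _)]
        exact mul_le_mul_of_nonneg_left (hgb s) (Real.exp_pos _).le
      calc ‖Real.exp (-α * (t - s)) * g s‖ ≤ Real.exp (-α * (t - s)) * 1 := this
        _ = Real.exp (-α * t) * Real.exp (α * s) := by
            rw [mul_one, ← Real.exp_add]; ring_nf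
  intro t ht
  -- the shifted function
  set Ωμ : ℝ → ℝ := fun s => Ω (s + μ) with hΩμ
  have hΩμm : Measurable Ωμ := hΩm.comp (measurable_id.add_const _)
  have hΩμabs : ∀ s, |Ωμ s| ≤ 1 := fun s => hΩabs _
  -- rewrite H (t + μ)
  have hshift : H (t + μ) = ∫ s in Iic t, Real.exp (-α * (t - s)) * Ωμ s := by
    rw [hH, shiftIntegralIic (fun s => Real.exp (-α * (t + μ - s)) * Ω s) t μ]
    congr 1; funext s
    have : t + (μ : ℝ) - (s + μ) = t - s := by ring
    rw [this]
  have hI1 := hint t Ωμ hΩμm hΩμabs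
  have hI2 := hint t Ω hΩm hΩabs
  have hdiff : H (t + μ) - H t
      = ∫ s in Iic t, Real.exp (-α * (t - s)) * (Ωμ s - Ω s) := by
    rw [hshift, hH, ← integral_sub hI1 hI2]
    congr 1; funext s; ring
  rw [hdiff]
  -- split the integral
  have hIdiff : IntegrableOn (fun s => Real.exp (-α * (t - s)) * (Ωμ s - Ω s)) (Iic t) := by
    have : (fun s => Real.exp (-α * (t - s)) * (Ωμ s - Ω s))
        = fun s => Real.exp (-α * (t - s)) * Ωμ s - Real.exp (-α * (t - s)) * Ω s := by
      funext s; ring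
    rw [this]; exact hI1.sub hI2
  have habs : |∫ s in Iic t, Real.exp (-α * (t - s)) * (Ωμ s - Ω s)|
      ≤ ∫ s in Iic t, |Real.exp (-α * (t - s)) * (Ωμ s - Ω s)| := by
    simpa only [Real.norm_eq_abs] using
      norm_integral_le_integral_norm (μ := volume.restrict (Iic t))
        (fun s => Real.exp (-α * (t - s)) * (Ωμ s - Ω s))
  have hsplit : Iic t = Iic (-(N : ℝ)) ∪ Ioc (-(N : ℝ)) t := (Iic_union_Ioc_eq_Iic ht).symm
  have hIabs : IntegrableOn (fun s => |Real.exp (-α * (t - s)) * (Ωμ s - Ω s)|) (Iic t) :=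
    hIdiff.abs
  have hIabs1 : IntegrableOn (fun s => |Real.exp (-α * (t - s)) * (Ωμ s - Ω s)|)
      (Iic (-(N : ℝ))) := hIabs.mono_set (hsplit ▸ subset_union_left)
  have hIabs2 : IntegrableOn (fun s => |Real.exp (-α * (t - s)) * (Ωμ s - Ω s)|)
      (Ioc (-(N : ℝ)) t) := hIabs.mono_set (hsplit ▸ subset_union_right)
  have hsum : ∫ s in Iic t, |Real.exp (-α * (t - s)) * (Ωμ s - Ω s)|
      = (∫ s in Iic (-(N : ℝ)), |Real.exp (-α * (t - s)) * (Ωμ s - Ω s)|)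
        + ∫ s in Ioc (-(N : ℝ)) t, |Real.exp (-α * (t - s)) * (Ωμ s - Ω s)| := by
    rw [hsplit, setIntegral_union (Iic_disjoint_Ioc le_rfl) measurableSet_Ioc hIabs1 hIabs2]
  -- bound on the tail Iic (-N)
  have hexpI : ∀ u : ℝ, IntegrableOn (fun s : ℝ => Real.exp (-α * t) * Real.exp (α * s))
      (Iic u) := fun u => (expIntegrableIic α u hα).const_mul _
  have htail : (∫ s in Iic (-(N : ℝ)), |Real.exp (-α * (t - s)) * (Ωμ s - Ω s)|)
      ≤ Real.exp (-α * (t + N)) / α := by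
    have hb : ∀ s ∈ Iic (-(N : ℝ)), |Real.exp (-α * (t - s)) * (Ωμ s - Ω s)|
        ≤ Real.exp (-α * t) * Real.exp (α * s) := by
      intro s _
      rw [abs_mul, abs_of_pos (Real.exp_pos _)]
      have h2 : |Ωμ s - Ω s| ≤ 2 := by
        calc |Ωμ s - Ω s| ≤ |Ωμ s| + |Ω s| := abs_sub _ _
          _ ≤ 1 + 1 := add_le_add (hΩμabs s) (hΩabs s)
          _ = 2 := by norm_num
      have h1 : |Ωμ s - Ω s| ≤ 1 := by
        rw [abs_sub_le_iff]
        constructor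
        · linarith [(hΩ01 (s + μ)).1, (hΩ01 (s + μ)).2, (hΩ01 s).1, (hΩ01 s).2]
        · linarith [(hΩ01 (s + μ)).1, (hΩ01 (s + μ)).2, (hΩ01 s).1, (hΩ01 s).2]
      calc Real.exp (-α * (t - s)) * |Ωμ s - Ω s| ≤ Real.exp (-α * (t - s)) * 1 :=
            mul_le_mul_of_nonneg_left h1 (Real.exp_pos _).le
        _ = Real.exp (-α * t) * Real.exp (α * s) := by
            rw [mul_one, ← Real.exp_add]; ring_nf
    calc (∫ s in Iic (-(N : ℝ)), |Real.exp (-α * (t - s)) * (Ωμ s - Ω s)|)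
        ≤ ∫ s in Iic (-(N : ℝ)), Real.exp (-α * t) * Real.exp (α * s) :=
          setIntegral_mono_on hIabs1 (hexpI _) measurableSet_Iic hb
      _ = Real.exp (-α * t) * (Real.exp (α * -(N : ℝ)) / α) := by
          rw [integral_const_mul, expIntegralIic α _ hα]
      _ = Real.exp (-α * (t + N)) / α := by
          rw [← mul_div_assoc, ← Real.exp_add]
          congr 2
          ring
  -- bound on the middle part
  have hmid : (∫ s in Ioc (-(N : ℝ)) t, |Real.exp (-α * (t - s)) * (Ωμ s - Ω s)|)
      ≤ ε / α := by
    have hb : ∀ s ∈ Ioc (-(N : ℝ)) t, |Real.exp (-α * (t - s)) * (Ωμ s - Ω s)|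
        ≤ ε * (Real.exp (-α * t) * Real.exp (α * s)) := by
      intro s hs
      have hfloor : (-(N : ℤ)) ≤ ⌊s⌋ := by
        rw [Int.le_floor]
        push_cast
        exact hs.1.le
      have hfloorμ : ⌊s + (μ : ℝ)⌋ = ⌊s⌋ + μ := by
        rw [← Int.floor_add_intCast s (μ : ℤ)]
        norm_num
      have hd : |Ωμ s - Ω s| ≤ ε := by
        rw [hΩμ]
        simp only [hΩ]
        rw [hfloorμ]
        exact hclose ⌊s⌋ hfloor
      rw [abs_mul, abs_of_pos (Real.exp_pos _)]
      calc Real.exp (-α * (t - s)) * |Ωμ s - Ω s| ≤ Real.exp (-α * (t - s)) * ε :=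
            mul_le_mul_of_nonneg_left hd (Real.exp_pos _).le
        _ = ε * (Real.exp (-α * t) * Real.exp (α * s)) := by
            rw [← Real.exp_add]; ring_nf
    calc (∫ s in Ioc (-(N : ℝ)) t, |Real.exp (-α * (t - s)) * (Ωμ s - Ω s)|)
        ≤ ∫ s in Ioc (-(N : ℝ)) t, ε * (Real.exp (-α * t) * Real.exp (α * s)) :=
          setIntegral_mono_on hIabs2
            (((hexpI t).mono_set Ioc_subset_Iic_self).const_mul ε) measurableSet_Ioc hb
      _ ≤ ∫ s in Iic t, ε * (Real.exp (-α * t) * Real.exp (α * s)) := by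
          refine setIntegral_mono_set ((hexpI t).const_mul ε) ?_ ?_
          · filter_upwards with s
            positivity
          · exact HasSubset.Subset.eventuallyLE Ioc_subset_Iic_self
      _ = ε * (Real.exp (-α * t) * (Real.exp (α * t) / α)) := by
          rw [integral_const_mul, integral_const_mul, expIntegralIic α t hα]
      _ = ε / α := by
          have h0 : Real.exp (-α * t) * (Real.exp (α * t) / α) = 1 / α := by
            rw [← mul_div_assoc, ← Real.exp_add]
            have h1 : -α * t + α * t = 0 := by ring
            rw [h1, Real.exp_zero]
          rw [h0]
          ring
  calc |∫ s in Iic t, Real.exp (-α * (t - s)) * (Ωμ s - Ω s)|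
      ≤ ∫ s in Iic t, |Real.exp (-α * (t - s)) * (Ωμ s - Ω s)| := habs
    _ = _ + _ := hsum
    _ ≤ Real.exp (-α * (t + N)) / α + ε / α := add_le_add htail hmid
    _ = ε / α + Real.exp (-α * (t + N)) / α := by ring
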